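/- Let f : \mathbb{R}_{\ge 0} \to \mathbb{R} be defined by f(t) = A + \sum_{i=1}^{m} \lceil t/T_i \rceil * C_i with A > 0, C_i \ge 0, T_i > 0. Then f is monotone nondecreasing, and if there exists t* > 0 with f(t*) \le t*, then the set {t > 0 : f(t) \le t} has a minimum element R, and f(R) = R or R is where f(t) first dips to \le t; moreover f(t) > t for all 0 < t < R. -/

import Mathlib

theorem stmt8 (m : ℕ) (A : ℝ) (hA : 0 < A)
    (T Ci : Fin m → ℝ) (hT : ∀ i, 0 < T i) (hCi : ∀ i, 0 ≤ Ci i)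
    (f : ℝ → ℝ) (hf : ∀ t, f t = A + ∑ i, (⌈t / T i⌉ : ℝ) * Ci i) :
    (∀ s t : ℝ, 0 ≤ s → s ≤ t → f s ≤ f t) ∧
    ((∃ t : ℝ, 0 < t ∧ f t ≤ t) →
      ∃ R : ℝ, IsLeast {t : ℝ | 0 < t ∧ f t ≤ t} R ∧
        ∀ t : ℝ, 0 < t → t < R → f t > t) := by
  have mono : ∀ s t : ℝ, s ≤ t → f s ≤ f t := by
    intro s t hst
    rw [hf s, hf t]
    apply add_le_add_right
    apply Finset.sum_le_sum
    intro i _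
    apply mul_le_mul_of_nonneg_right _ (hCi i)
    exact_mod_cast Int.ceil_le_ceil ((div_le_div_iff_of_pos_right (hT i)).mpr hst)
  refine ⟨fun s t _ hst => mono s t hst, ?_⟩
  rintro ⟨t₀, ht₀, hft₀⟩
  set S : Set ℝ := {t : ℝ | 0 < t ∧ f t ≤ t} with hS
  have hne : S.Nonempty := ⟨t₀, ht₀, hft₀⟩
  have hAle : ∀ t ∈ S, A ≤ t := by
    rintro t ⟨htpos, hft⟩
    have : A ≤ f t := by
      rw [hf t]
      have : 0 ≤ ∑ i, (⌈t / T i⌉ : ℝ) * Ci i := by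
        apply Finset.sum_nonneg
        intro i _
        apply mul_nonneg _ (hCi i)
        exact_mod_cast Int.ceil_nonneg (div_nonneg htpos.le (hT i).le)
      linarith
    linarith
  have hbdd : BddBelow S := ⟨A, hAle⟩
  set R := sInf S with hR
  have hRA : A ≤ R := le_csInf hne hAle
  have hRpos : 0 < R := lt_of_lt_of_le hA hRA
  have hfR : f R ≤ R := by
    apply le_csInf hne
    rintro t ⟨htpos, hft⟩
    exact (mono R t (csInf_le hbdd ⟨htpos, hft⟩)).trans hft
  refine ⟨R, ⟨⟨hRpos, hfR⟩, fun t ht => csInf_le hbdd ht⟩, ?_⟩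
  intro t htpos htR
  by_contra h
  push_neg at h
  exact absurd (csInf_le hbdd ⟨htpos, h⟩) (not_le.mpr htR)
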